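/- For a positive integer m = \sum_{i=0}^{s} 2^{t_i} with t_0 > t_1 > ... > t_s \ge 0, define ex(m) = \sum_{i=0}^{s} t_i 2^{t_i} + \sum_{i=0}^{s} 2 i 2^{t_i}. Then for all integers 1 \le m \le 2^t, one has ex(m) \le t m. -/

import Mathlib

open Finset

lemma sum_pow_lt (s : ℕ) (t : Fin (s+1) → ℕ) (ht : StrictAnti t) :
    ∑ i, 2 ^ (t i) < 2 ^ (t 0 + 1) := by
  induction s with
  | zero => simpa using Nat.pow_lt_pow_right one_lt_two (Nat.lt_succ_self _)
  | succ s ih =>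
    rw [Fin.sum_univ_succ]
    have ht' : StrictAnti (t ∘ Fin.succ) := fun a b h => ht (by simpa using h)
    have h1 := ih (t ∘ Fin.succ) ht'
    simp only [Function.comp_apply] at h1
    have h2 : t (Fin.succ 0) < t 0 := ht (by simp [Fin.lt_def])
    have h3 : (2:ℕ) ^ (t (Fin.succ 0) + 1) ≤ 2 ^ (t 0) :=
      Nat.pow_le_pow_right (by norm_num) (by omega)
    have : (2:ℕ)^(t 0 + 1) = 2^(t 0) + 2^(t 0) := by ring
    omega

lemma ex_key (s : ℕ) (t : Fin (s+1) → ℕ) (ht : StrictAnti t) :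
    (∑ i, t i * 2 ^ (t i)) + (∑ i : Fin (s+1), 2 * (i : ℕ) * 2 ^ (t i))
      + 2 ^ (t 0 + 1) ≤ (t 0 + 2) * ∑ i, 2 ^ (t i) := by
  induction s with
  | zero => simp [pow_succ]; ring_nf; omega
  | succ s ih =>
    have ht' : StrictAnti (t ∘ Fin.succ) := fun a b h => ht (by simpa using h)
    have IH := ih (t ∘ Fin.succ) ht'
    have hmlt := sum_pow_lt s (t ∘ Fin.succ) ht'
    simp only [Function.comp_apply] at IH hmlt
    have h2 : t (Fin.succ 0) < t 0 := ht (by simp [Fin.lt_def])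
    rw [Fin.sum_univ_succ (f := fun i : Fin (s+2) => t i * 2 ^ t i),
        Fin.sum_univ_succ (f := fun i : Fin (s+2) => 2 * (i : ℕ) * 2 ^ t i),
        Fin.sum_univ_succ (f := fun i : Fin (s+2) => 2 ^ t i)]
    have hshift : ∑ i : Fin (s+1), 2 * ((Fin.succ i : Fin (s+2)) : ℕ) * 2 ^ (t (Fin.succ i))
        = (∑ i : Fin (s+1), 2 * (i : ℕ) * 2 ^ (t (Fin.succ i)))
          + 2 * ∑ i : Fin (s+1), 2 ^ (t (Fin.succ i)) := by
      rw [Finset.mul_sum, ← Finset.sum_add_distrib]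
      refine Finset.sum_congr rfl fun i _ => ?_
      simp only [Fin.val_succ]
      ring
    rw [hshift]
    have p1 : (t (Fin.succ 0) + 2) * (∑ i : Fin (s+1), 2 ^ (t (Fin.succ i)))
        + 2 * (∑ i : Fin (s+1), 2 ^ (t (Fin.succ i)))
        = (t (Fin.succ 0) + 4) * (∑ i : Fin (s+1), 2 ^ (t (Fin.succ i))) := by ring
    have hm : (t (Fin.succ 0) + 4) * (∑ i : Fin (s+1), 2 ^ (t (Fin.succ i)))
        ≤ (t 0 + 3) * (∑ i : Fin (s+1), 2 ^ (t (Fin.succ i))) :=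
      Nat.mul_le_mul_right _ (by omega)
    have p2 : (t 0 + 3) * (∑ i : Fin (s+1), 2 ^ (t (Fin.succ i)))
        = (t 0 + 2) * (∑ i : Fin (s+1), 2 ^ (t (Fin.succ i)))
          + (∑ i : Fin (s+1), 2 ^ (t (Fin.succ i))) := by ring
    have hrhs : (t 0 + 2) * (2 ^ (t 0) + ∑ i : Fin (s+1), 2 ^ (t (Fin.succ i)))
        = t 0 * 2 ^ (t 0) + 2 * 2 ^ (t 0)
          + (t 0 + 2) * (∑ i : Fin (s+1), 2 ^ (t (Fin.succ i))) := by ring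
    have hp : (2:ℕ) ^ (t 0 + 1) = 2 * 2 ^ (t 0) := by ring
    simp only [Fin.val_zero, Nat.mul_zero, Nat.zero_mul, mul_zero, zero_mul]
    omega

open Finset in
/-- If `m = ∑_{i=0}^{s} 2^{t_i}` with `t_0 > t_1 > ... > t_s ≥ 0` and `1 ≤ m ≤ 2^T`,
then `ex(m) = ∑ t_i 2^{t_i} + ∑ 2 i 2^{t_i} ≤ T m`. -/
theorem ex_le (s T m : ℕ) (t : Fin (s+1) → ℕ) (ht : StrictAnti t)
    (hm : m = ∑ i, 2 ^ (t i)) (h1 : 1 ≤ m) (h2 : m ≤ 2 ^ T) :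
    (∑ i, t i * 2 ^ (t i)) + (∑ i : Fin (s+1), 2 * (i : ℕ) * 2 ^ (t i)) ≤ T * m := by
  have key := ex_key s t ht
  rw [← hm] at key
  have hm0 : 2 ^ (t 0) ≤ m := by
    rw [hm]
    exact Finset.single_le_sum (f := fun i => 2 ^ (t i)) (fun i _ => Nat.zero_le _)
      (Finset.mem_univ 0)
  have ht0T : t 0 ≤ T := by
    by_contra h
    push_neg at h
    have : 2 ^ T < 2 ^ (t 0) := Nat.pow_lt_pow_right (by norm_num) h
    omega
  cases s with
  | zero =>
    -- m = 2^(t 0), key gives equality-ish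
    have hme : m = 2 ^ (t 0) := by rw [hm]; simp
    have : T * m = T * 2 ^ (t 0) := by rw [hme]
    have hkey2 : (∑ i, t i * 2 ^ (t i)) + (∑ i : Fin 1, 2 * (i : ℕ) * 2 ^ (t i))
        ≤ t 0 * m := by
      have : (2:ℕ) ^ (t 0 + 1) = 2 * 2 ^ (t 0) := by ring
      nlinarith [key, hme]
    calc _ ≤ t 0 * m := hkey2
      _ ≤ T * m := Nat.mul_le_mul_right m ht0T
  | succ s =>
    -- m > 2^(t 0), so t 0 < T
    have hgt : 2 ^ (t 0) < m := by
      rw [hm, Fin.sum_univ_succ]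
      have : 0 < 2 ^ (t (Fin.succ 0)) := Nat.pow_pos (by norm_num)
      have hpos : 0 < ∑ i : Fin (s+1), 2 ^ (t (Fin.succ i)) :=
        Finset.sum_pos (fun i _ => Nat.pow_pos (by norm_num)) Finset.univ_nonempty
      omega
    have ht0T' : t 0 + 1 ≤ T := by
      by_contra h
      push_neg at h
      have : t 0 = T := by omega
      rw [this] at hgt
      omega
    have hmlt : m < 2 ^ (t 0 + 1) := by rw [hm]; exact sum_pow_lt _ t ht
    -- key : ex + 2^(t0+1) ≤ (t0+2)*m ; so ex ≤ (t0+1)*m ≤ T*m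
    have : (t 0 + 2) * m = (t 0 + 1) * m + m := by ring
    have hT : (t 0 + 1) * m ≤ T * m := Nat.mul_le_mul_right m ht0T'
    omega
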